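/- arXiv:2403.14307 — 2 statements merged into one kernel-verified Lean document; each statement's English description precedes it below -/
import Mathlib

section
/- For every β ≥ 0 and all reals x₁ ≤ x₂, one has F_β(x₂) − F_β(x₁) ≤ tanh(β)·(x₂ − x₁); i.e. F_β is Lipschitz with constant tanh(β). -/
noncomputable def artanh (x : ℝ) : ℝ := Real.log ((1 + x) / (1 - x)) / 2

noncomputable def F (β x : ℝ) : ℝ := artanh (Real.tanh β * Real.tanh x)

lemma tanh_sq_lt_one (x : ℝ) : Real.tanh x ^ 2 < 1 := by
  have hc := Real.cosh_pos x
  rw [Real.tanh_eq_sinh_div_cosh, div_pow, div_lt_one (by positivity)]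
  nlinarith [Real.cosh_sq x]

lemma hasDerivAt_tanh (x : ℝ) : HasDerivAt Real.tanh (1 - Real.tanh x ^ 2) x := by
  have hc := (Real.cosh_pos x).ne'
  have h := (Real.hasDerivAt_sinh x).div (Real.hasDerivAt_cosh x) hc
  have : (Real.cosh x * Real.cosh x - Real.sinh x * Real.sinh x) / Real.cosh x ^ 2
      = 1 - Real.tanh x ^ 2 := by
    rw [Real.tanh_eq_sinh_div_cosh]; field_simp
  rw [this] at h
  exact h.congr_of_eventuallyEq (by filter_upwards with y using Real.tanh_eq_sinh_div_cosh y)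

lemma hasDerivAt_F (β x : ℝ) :
    HasDerivAt (F β) (Real.tanh β * (1 - Real.tanh x ^ 2) /
      (1 - (Real.tanh β * Real.tanh x) ^ 2)) x := by
  set t := Real.tanh β with ht
  have htsq : t ^ 2 < 1 := tanh_sq_lt_one β
  have key : ∀ y : ℝ, (t * Real.tanh y) ^ 2 < 1 := by
    intro y
    have h1 := tanh_sq_lt_one y
    have := tanh_sq_lt_one β
    calc (t * Real.tanh y) ^ 2 = t ^ 2 * Real.tanh y ^ 2 := by ring
    _ < 1 := by nlinarith [sq_nonneg t, sq_nonneg (Real.tanh y)]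
  have hp : ∀ y : ℝ, 0 < 1 + t * Real.tanh y := by
    intro y; nlinarith [key y, abs_nonneg (t * Real.tanh y)]
  have hm : ∀ y : ℝ, 0 < 1 - t * Real.tanh y := by
    intro y; nlinarith [key y]
  have hF : F β = fun y => (Real.log (1 + t * Real.tanh y) - Real.log (1 - t * Real.tanh y)) / 2 := by
    funext y
    rw [F, artanh, Real.log_div (hp y).ne' (hm y).ne']
  rw [hF]
  have hin : HasDerivAt (fun y => t * Real.tanh y) (t * (1 - Real.tanh x ^ 2)) x :=
    (hasDerivAt_tanh x).const_mul t
  have h1 : HasDerivAt (fun y => 1 + t * Real.tanh y) (t * (1 - Real.tanh x ^ 2)) x :=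
    hin.const_add 1
  have h2 : HasDerivAt (fun y => 1 - t * Real.tanh y) (-(t * (1 - Real.tanh x ^ 2))) x :=
    hin.neg.const_add 1
  have := ((h1.log (hp x).ne').sub (h2.log (hm x).ne')).div_const 2
  refine this.congr_deriv ?_
  have hpx := hp x; have hmx := hm x
  have hden : (1 - (t * Real.tanh x) ^ 2) ≠ 0 := by nlinarith [key x]
  rw [show 1 - (t * Real.tanh x) ^ 2 = (1 + t * Real.tanh x) * (1 - t * Real.tanh x) by ring]
  field_simp
  ring

theorem stmt_2 (β : ℝ) (hβ : 0 ≤ β) (x₁ x₂ : ℝ) (hx : x₁ ≤ x₂) :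
    F β x₂ - F β x₁ ≤ Real.tanh β * (x₂ - x₁) := by
  set t := Real.tanh β with ht
  have ht0 : 0 ≤ t := by
    rw [ht, Real.tanh_eq_sinh_div_cosh]
    have : 0 ≤ Real.sinh β := by
      rw [Real.sinh_eq]
      have := Real.exp_le_exp.2 (neg_le_self hβ)
      linarith
    exact div_nonneg this (Real.cosh_pos β).le
  set g : ℝ → ℝ := fun x => t * x - F β x with hg
  have hd : ∀ x : ℝ, HasDerivAt g
      (t - t * (1 - Real.tanh x ^ 2) / (1 - (t * Real.tanh x) ^ 2)) x := by
    intro x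
    exact (((hasDerivAt_id x).const_mul t).sub (hasDerivAt_F β x)).congr_deriv (by rw [mul_one])
  have hmono : Monotone g := by
    apply monotone_of_deriv_nonneg
    · exact fun x => (hd x).differentiableAt
    · intro x
      rw [(hd x).deriv]
      have hu := tanh_sq_lt_one x
      have htq := tanh_sq_lt_one β
      have hden : 0 < 1 - (t * Real.tanh x) ^ 2 := by nlinarith [sq_nonneg (t * Real.tanh x), sq_nonneg t, sq_nonneg (Real.tanh x)]
      rw [sub_nonneg, div_le_iff₀ hden]
      nlinarith [mul_nonneg (mul_nonneg ht0 (sq_nonneg (Real.tanh x))) (sub_nonneg.2 htq.le)]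
  have := hmono hx
  simp only [hg] at this
  linarith
end

section
/- For the single-site zero-field recursion g(z) = (k−1)·F_β(z) with k ≥ 2: if (k−1)·tanh(β) > 1 then g has a fixed point z̄ > 0, while if (k−1)·tanh(β) < 1 then 0 is the only fixed point of g in ℝ. -/
lemma abs_tanh_lt_one (x : ℝ) : |Real.tanh x| < 1 := by
  have hc := Real.cosh_pos x
  have hsq := Real.cosh_sq_sub_sinh_sq x
  rw [abs_lt]
  rw [Real.tanh_eq_sinh_div_cosh]
  constructor
  · rw [lt_div_iff₀ hc]; nlinarith
  · rw [div_lt_one hc]; nlinarith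

lemma hasDerivAt_artanh {x : ℝ} (hx : |x| < 1) :
    HasDerivAt artanh (1 / (1 - x ^ 2)) x := by
  rw [abs_lt] at hx
  have h1 : (0:ℝ) < 1 + x := by linarith
  have h2 : (0:ℝ) < 1 - x := by linarith
  have hl1 : HasDerivAt (fun y : ℝ => Real.log (1 + y)) (1 / (1 + x)) x := by
    have : HasDerivAt (fun y : ℝ => 1 + y) 1 x := (hasDerivAt_id x).const_add 1
    simpa using this.log (ne_of_gt h1)
  have hl2 : HasDerivAt (fun y : ℝ => Real.log (1 - y)) (-(1 / (1 - x))) x := by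
    have : HasDerivAt (fun y : ℝ => 1 - y) (-1) x := by
      exact (hasDerivAt_id' x).const_sub 1
    have := this.log (ne_of_gt h2)
    convert this using 1
    field_simp
  have h : HasDerivAt (fun y : ℝ => (Real.log (1 + y) - Real.log (1 - y)) / 2)
      ((1 / (1 + x) - -(1 / (1 - x))) / 2) x := (hl1.sub hl2).div_const 2
  have heq : (fun y : ℝ => (Real.log (1 + y) - Real.log (1 - y)) / 2)
      =ᶠ[nhds x] artanh := by
    have hS : {y : ℝ | -1 < y ∧ y < 1} ∈ nhds x := by
      have : IsOpen {y : ℝ | -1 < y ∧ y < 1} :=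
        (isOpen_lt continuous_const continuous_id).inter
          (isOpen_lt continuous_id continuous_const)
      exact this.mem_nhds ⟨hx.1, hx.2⟩
    filter_upwards [hS] with y hy
    have h1y : (0:ℝ) < 1 + y := by linarith [hy.1]
    have h2y : (0:ℝ) < 1 - y := by linarith [hy.2]
    simp only [artanh]
    rw [Real.log_div (ne_of_gt h1y) (ne_of_gt h2y)]
  have h' := h.congr_of_eventuallyEq heq.symm
  have h3 : (1:ℝ) - x ^ 2 ≠ 0 := by nlinarith
  refine h'.congr_deriv ?_
  field_simp
  ring

lemma F_deriv_lt {β x c : ℝ} (hc : 1 ≤ c) (hct : c * Real.tanh β < 1) :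
    c * (Real.tanh β * (1 - Real.tanh x ^ 2) / (1 - (Real.tanh β * Real.tanh x) ^ 2)) < 1 := by
  set t := Real.tanh β with ht
  set T := Real.tanh x with hT
  have hb : |t| < 1 := abs_tanh_lt_one β
  have hx : |T| < 1 := abs_tanh_lt_one x
  have hb' := abs_lt.mp hb
  have hx' := abs_lt.mp hx
  have habs : |t * T| < 1 := by
    rw [abs_mul]
    calc |t| * |T| ≤ |t| * 1 := mul_le_mul_of_nonneg_left hx.le (abs_nonneg _)
      _ = |t| := mul_one _
      _ < 1 := hb
  have hden : 0 < 1 - (t * T) ^ 2 := by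
    have h1 : (t * T) ^ 2 < 1 := by
      rw [← sq_abs]
      nlinarith [abs_nonneg (t * T)]
    linarith
  have hT2 : T ^ 2 < 1 := by rw [← sq_abs]; nlinarith [abs_nonneg T]
  have ht2 : t ^ 2 < 1 := by rw [← sq_abs]; nlinarith [abs_nonneg t]
  rcases le_or_gt t 0 with htn | htp
  · have hnum : t * (1 - T ^ 2) ≤ 0 := by
      nlinarith [mul_nonneg (neg_nonneg.mpr htn) (by linarith : (0:ℝ) ≤ 1 - T ^ 2)]
    have hq : t * (1 - T ^ 2) / (1 - (t * T) ^ 2) ≤ 0 :=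
      div_nonpos_of_nonpos_of_nonneg hnum hden.le
    nlinarith [mul_nonneg (by linarith : (0:ℝ) ≤ c) (neg_nonneg.mpr hq)]
  · -- t > 0 : derivative ≤ t, so c * deriv ≤ c * t < 1
    have key : t * (1 - T ^ 2) / (1 - (t * T) ^ 2) ≤ t := by
      rw [div_le_iff₀ hden]
      nlinarith [mul_nonneg (mul_nonneg htp.le (sq_nonneg T)) (by linarith : (0:ℝ) ≤ 1 - t ^ 2)]
    calc c * (t * (1 - T ^ 2) / (1 - (t * T) ^ 2)) ≤ c * t :=
          mul_le_mul_of_nonneg_left key (by linarith)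
      _ < 1 := hct

lemma artanh_le {x t : ℝ} (hx : -1 < x) (hxt : x ≤ t) (ht : t < 1) :
    artanh x ≤ artanh t := by
  unfold artanh
  have h1x : (0:ℝ) < 1 + x := by linarith
  have h2x : (0:ℝ) < 1 - x := by linarith
  have h1t : (0:ℝ) < 1 + t := by linarith
  have h2t : (0:ℝ) < 1 - t := by linarith
  have h : (1 + x) / (1 - x) ≤ (1 + t) / (1 - t) := by
    rw [div_le_div_iff₀ h2x h2t]; nlinarith
  have := Real.log_le_log (by positivity) h
  linarith

theorem stmt_16 (β : ℝ) (k : ℕ) (hk : 2 ≤ k) :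
    (((k : ℝ) - 1) * Real.tanh β > 1 →
      ∃ z : ℝ, 0 < z ∧ ((k : ℝ) - 1) * F β z = z) ∧
    (((k : ℝ) - 1) * Real.tanh β < 1 →
      ∀ z : ℝ, ((k : ℝ) - 1) * F β z = z → z = 0) := by
  set c : ℝ := (k : ℝ) - 1 with hc
  have hc1 : 1 ≤ c := by
    have : (2:ℝ) ≤ (k:ℝ) := by exact_mod_cast hk
    simp [hc]; linarith
  set t := Real.tanh β with ht
  have hb : |t| < 1 := abs_tanh_lt_one β
  have hb' := abs_lt.mp hb
  have hF0 : F β 0 = 0 := by simp [F, artanh, Real.tanh_zero]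
  constructor
  · -- supercritical case
    intro hct
    have htpos : 0 < t := by nlinarith
    -- φ z = c * F β z, ψ z = φ z − z, ψ'(0) = c*t − 1 > 0
    have hFd : ∀ x, HasDerivAt (fun z => c * F β z - z)
        (c * (t * (1 - Real.tanh x ^ 2) / (1 - (t * Real.tanh x) ^ 2)) - 1) x := by
      intro x
      exact ((hasDerivAt_F β x).const_mul c).sub (hasDerivAt_id x)
    have hψ0 : HasDerivAt (fun z => c * F β z - z) (c * t - 1) 0 := by
      have := hFd 0
      simpa [Real.tanh_zero] using this
    set M : ℝ := c * artanh t + 1 with hM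
    have hart : 0 ≤ artanh t := by
      unfold artanh
      have : (1:ℝ) ≤ (1 + t) / (1 - t) := by
        rw [le_div_iff₀ (by linarith)]; nlinarith
      have := Real.log_nonneg this
      linarith
    have hMpos : 0 < M := by nlinarith
    -- bound: ∀ z, c * F β z ≤ c * artanh t < M
    have hub : ∀ z, c * F β z ≤ c * artanh t := by
      intro z
      have hz := abs_lt.mp (abs_tanh_lt_one z)
      have hFle : F β z ≤ artanh t := by
        unfold F
        apply artanh_le _ _ hb'.2
        · nlinarith
        · nlinarith
      exact mul_le_mul_of_nonneg_left hFle (by linarith)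
    -- find small ε with ψ ε > 0, using slope
    have hslope := hasDerivAt_iff_tendsto_slope.mp hψ0
    have hpos_lim : (0:ℝ) < c * t - 1 := by linarith
    have hev : ∀ᶠ z in nhdsWithin 0 {(0:ℝ)}ᶜ,
        0 < slope (fun z => c * F β z - z) 0 z :=
      hslope.eventually (eventually_gt_nhds hpos_lim)
    have hle : nhdsWithin (0:ℝ) (Set.Ioi 0) ≤ nhdsWithin 0 {(0:ℝ)}ᶜ := by
      apply nhdsWithin_mono
      intro z hz
      exact ne_of_gt hz
    have hev2 : ∀ᶠ z in nhdsWithin (0:ℝ) (Set.Ioi 0),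
        0 < slope (fun z => c * F β z - z) 0 z := hle hev
    have hev3 : ∀ᶠ z in nhdsWithin (0:ℝ) (Set.Ioi 0), z < M :=
      eventually_nhdsWithin_of_eventually_nhds (eventually_lt_nhds hMpos)
    have hev4 : ∀ᶠ z in nhdsWithin (0:ℝ) (Set.Ioi 0), z ∈ Set.Ioi (0:ℝ) :=
      eventually_mem_nhdsWithin
    obtain ⟨ε, hsl, hεM, hεpos'⟩ := (hev2.and (hev3.and hev4)).exists
    have hεpos : 0 < ε := hεpos'
    have hψε : 0 < c * F β ε - ε := by
      have : slope (fun z => c * F β z - z) 0 ε = (c * F β ε - ε) / ε := by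
        simp [slope_def_field, hF0]
      rw [this] at hsl
      have := mul_pos hsl hεpos
      rw [div_mul_cancel₀] at this
      · linarith
      · exact ne_of_gt hεpos
    have hψM : c * F β M - M < 0 := by
      have := hub M
      simp only [hM] at *
      linarith
    -- IVT on [ε, M]
    have hcont : ContinuousOn (fun z => c * F β z - z) (Set.Icc ε M) := by
      intro x _
      exact ((hFd x).continuousAt).continuousWithinAt
    have hεM' : ε ≤ M := le_of_lt hεM
    have := intermediate_value_Icc' hεM' hcont
    have h0mem : (0:ℝ) ∈ Set.Icc (c * F β M - M) (c * F β ε - ε) := ⟨hψM.le, hψε.le⟩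
    obtain ⟨z, hzmem, hz0⟩ := this h0mem
    have hz0' : c * F β z - z = 0 := hz0
    exact ⟨z, lt_of_lt_of_le hεpos hzmem.1, by linarith⟩
  · -- subcritical case
    intro hct z hz
    -- h z = z − c F β z strictly mono, h 0 = 0
    have hmono : StrictMono (fun z => z - c * F β z) := by
      apply strictMono_of_deriv_pos
      intro x
      have hd : HasDerivAt (fun z => z - c * F β z)
          (1 - c * (t * (1 - Real.tanh x ^ 2) / (1 - (t * Real.tanh x) ^ 2))) x :=
        (hasDerivAt_id x).sub ((hasDerivAt_F β x).const_mul c)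
      rw [hd.deriv]
      have := F_deriv_lt (x := x) hc1 hct
      linarith
    have h0 : (fun z => z - c * F β z) 0 = 0 := by simp [hF0]
    have hz' : (fun z => z - c * F β z) z = 0 := by simp; linarith
    have := hmono.injective (hz'.trans h0.symm)
    exact this
end
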